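/- Let {X_k} be a martingale difference sequence with E[X_k|F_{k-1}]=0 and E[X_k^2|F_{k-1}]=1, let {Y_k} be independent of {X_k} with E[Y_k^2] -> 1 and uniformly bounded fourth moments for X_k and Y_k, and set P_n = (1/sqrt(n)) sum_{i=1}^n X_i Y_i. Then E[P_n^4] -> 3 if and only if (1/n^2) * sum over pairs i != j of E[Y_i^2 Y_j^2] -> 1. -/

import Mathlib

open MeasureTheory ProbabilityTheory Filter Finset

private lemma mul4_nonneg_le {p q r s : ℝ} (hp : 0 ≤ p) (hq : 0 ≤ q) (hr : 0 ≤ r) (hs : 0 ≤ s) :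
    p * q * r * s ≤ (p ^ 4 + q ^ 4 + r ^ 4 + s ^ 4) / 4 := by
  nlinarith [sq_nonneg (p * q - r * s), sq_nonneg (p ^ 2 - q ^ 2), sq_nonneg (r ^ 2 - s ^ 2),
    mul_nonneg hp hq, mul_nonneg hr hs, sq_nonneg (p * q), sq_nonneg (r * s)]

private lemma abs_mul4_le (a b c d : ℝ) :
    |a * b * c * d| ≤ (a ^ 4 + b ^ 4 + c ^ 4 + d ^ 4) / 4 := by
  have h : |a * b * c * d| = |a| * |b| * |c| * |d| := by
    rw [abs_mul, abs_mul, abs_mul]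
  have h4 : ∀ x : ℝ, |x| ^ 4 = x ^ 4 := fun x => by
    rw [← abs_pow, abs_of_nonneg (by positivity)]
  rw [h]
  calc |a| * |b| * |c| * |d| ≤ (|a| ^ 4 + |b| ^ 4 + |c| ^ 4 + |d| ^ 4) / 4 :=
        mul4_nonneg_le (abs_nonneg a) (abs_nonneg b) (abs_nonneg c) (abs_nonneg d)
    _ = (a ^ 4 + b ^ 4 + c ^ 4 + d ^ 4) / 4 := by rw [h4, h4, h4, h4]

private lemma integrable_mul4 {Ω : Type*} {mΩ : MeasurableSpace Ω} {μ : Measure Ω}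
    {f g h k : Ω → ℝ}
    (hf : AEStronglyMeasurable f μ) (hg : AEStronglyMeasurable g μ)
    (hh : AEStronglyMeasurable h μ) (hk : AEStronglyMeasurable k μ)
    (hf4 : Integrable (fun ω => f ω ^ 4) μ) (hg4 : Integrable (fun ω => g ω ^ 4) μ)
    (hh4 : Integrable (fun ω => h ω ^ 4) μ) (hk4 : Integrable (fun ω => k ω ^ 4) μ) :
    Integrable (fun ω => f ω * g ω * h ω * k ω) μ := by
  refine Integrable.mono' ((((hf4.add hg4).add hh4).add hk4).div_const 4)
    (((hf.mul hg).mul hh).mul hk) ?_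
  filter_upwards with ω
  rw [Real.norm_eq_abs]
  exact abs_mul4_le (f ω) (g ω) (h ω) (k ω)

private lemma integral_CS {Ω : Type*} {mΩ : MeasurableSpace Ω} {μ : Measure Ω}
    {u v : Ω → ℝ} (hu : AEStronglyMeasurable u μ) (hv : AEStronglyMeasurable v μ)
    (hu2 : Integrable (fun ω => u ω ^ 2) μ) (hv2 : Integrable (fun ω => v ω ^ 2) μ) :
    |∫ ω, u ω * v ω ∂μ| ≤ Real.sqrt (∫ ω, u ω ^ 2 ∂μ) * Real.sqrt (∫ ω, v ω ^ 2 ∂μ) := by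
  have h2 : (ENNReal.ofReal (2:ℝ)) = 2 := by simp [ENNReal.ofReal_ofNat]
  have hMu : MemLp (fun ω => |u ω|) (ENNReal.ofReal 2) μ := by
    rw [h2, memLp_two_iff_integrable_sq (by simpa [Real.norm_eq_abs] using hu.norm)]
    simpa [sq_abs] using hu2
  have hMv : MemLp (fun ω => |v ω|) (ENNReal.ofReal 2) μ := by
    rw [h2, memLp_two_iff_integrable_sq (by simpa [Real.norm_eq_abs] using hv.norm)]
    simpa [sq_abs] using hv2
  have hpq : Real.HolderConjugate 2 2 := (Real.holderConjugate_iff_eq_conjExponent (by norm_num)).2 (by norm_num)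
  have hH := integral_mul_le_Lp_mul_Lq_of_nonneg hpq
    (Filter.Eventually.of_forall fun ω => abs_nonneg (u ω))
    (Filter.Eventually.of_forall fun ω => abs_nonneg (v ω)) hMu hMv
  have h1 : |∫ ω, u ω * v ω ∂μ| ≤ ∫ ω, |u ω| * |v ω| ∂μ := by
    simpa [Real.norm_eq_abs, abs_mul] using
      norm_integral_le_integral_norm (μ := μ) (f := fun ω => u ω * v ω)
  refine h1.trans (hH.trans (le_of_eq ?_))
  have hrw : ∀ w : Ω → ℝ, (∫ a, |w a| ^ (2:ℝ) ∂μ) ^ (1/(2:ℝ)) = Real.sqrt (∫ ω, w ω ^ 2 ∂μ) := by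
    intro w
    rw [Real.sqrt_eq_rpow]
    congr 1
    refine integral_congr_ae (Filter.Eventually.of_forall fun ω => ?_)
    simp [Real.rpow_two, sq_abs]
  rw [hrw u, hrw v]

private lemma expand4 {ι : Type*} (s : Finset ι) (f : ι → ℝ) :
    (∑ i ∈ s, f i) ^ 4 = ∑ i ∈ s, ∑ j ∈ s, ∑ k ∈ s, ∑ l ∈ s, f l * f k * f j * f i := by
  have h : (∑ i ∈ s, f i) ^ 4
      = (∑ i ∈ s, f i) * (∑ j ∈ s, f j) * (∑ k ∈ s, f k) * (∑ l ∈ s, f l) := by ring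
  rw [h]
  simp only [Finset.sum_mul, Finset.mul_sum]

private lemma expand3 {ι : Type*} (s : Finset ι) (f : ι → ℝ) (g : ℝ) :
    (∑ i ∈ s, f i) ^ 3 * g = ∑ i ∈ s, ∑ j ∈ s, ∑ k ∈ s, f k * f j * f i * g := by
  have h : (∑ i ∈ s, f i) ^ 3 * g
      = (∑ i ∈ s, f i) * (∑ j ∈ s, f j) * (∑ k ∈ s, f k) * g := by ring
  rw [h]
  simp only [Finset.sum_mul, Finset.mul_sum]

private lemma expand2 {ι : Type*} (s : Finset ι) (f : ι → ℝ) (g : ℝ) :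
    (∑ i ∈ s, f i) ^ 2 * g ^ 2 = ∑ i ∈ s, ∑ j ∈ s, f i * f j * g * g := by
  have h : (∑ i ∈ s, f i) ^ 2 * g ^ 2
      = (∑ i ∈ s, f i) * ((∑ j ∈ s, f j) * g) * g := by ring
  rw [h]
  simp only [Finset.sum_mul, Finset.mul_sum]
  exact Finset.sum_congr rfl fun i _ => Finset.sum_congr rfl fun j _ => by ring

private lemma expand1 {ι : Type*} (s : Finset ι) (f : ι → ℝ) (g : ℝ) :
    (∑ i ∈ s, f i) * g ^ 3 = ∑ i ∈ s, f i * g * g * g := by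
  have h : (∑ i ∈ s, f i) * g ^ 3 = (∑ i ∈ s, f i) * g * g * g := by ring
  rw [h]
  simp only [Finset.sum_mul]

theorem fourth_moment_iff_mixed_moments {Ω : Type*} {mΩ : MeasurableSpace Ω} (μ : Measure Ω)
    [IsProbabilityMeasure μ]
    (X Y : ℕ → Ω → ℝ) (ℱ : Filtration ℕ mΩ)
    (hadapt : Adapted ℱ X)
    (hX0mean : ∫ ω, X 0 ω ∂μ = 0)
    (hX0var : ∫ ω, (X 0 ω) ^ 2 ∂μ = 1)
    (hcondmean : ∀ k, μ[X (k + 1)|ℱ k] =ᵐ[μ] 0)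
    (hcondvar : ∀ k, μ[fun ω => (X (k + 1) ω) ^ 2|ℱ k] =ᵐ[μ] 1)
    (hYmeas : ∀ k, Measurable (Y k))
    (hindep : IndepFun (fun ω k => X k ω) (fun ω k => Y k ω) μ)
    (hY2 : Tendsto (fun k => ∫ ω, (Y k ω) ^ 2 ∂μ) atTop (nhds 1))
    (C : ℝ)
    (hX4i : ∀ k, Integrable (fun ω => (X k ω) ^ 4) μ)
    (hX4 : ∀ k, ∫ ω, (X k ω) ^ 4 ∂μ ≤ C)
    (hY4i : ∀ k, Integrable (fun ω => (Y k ω) ^ 4) μ)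
    (hY4 : ∀ k, ∫ ω, (Y k ω) ^ 4 ∂μ ≤ C) :
    Tendsto
        (fun n => ∫ ω, ((∑ i ∈ range n, X i ω * Y i ω) / Real.sqrt n) ^ 4 ∂μ)
        atTop (nhds 3)
      ↔ Tendsto
        (fun n => (∑ i ∈ range n, ∑ j ∈ range n \ {i},
            ∫ ω, (Y i ω) ^ 2 * (Y j ω) ^ 2 ∂μ) / (n : ℝ) ^ 2)
        atTop (nhds 1) := by
  classical
  have hC0 : 0 ≤ C := le_trans (integral_nonneg fun ω => by positivity) (hX4 0)
  have hXsm : ∀ k, AEStronglyMeasurable (X k) μ :=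
    fun k => ((hadapt k).mono (ℱ.le k) le_rfl).aestronglyMeasurable
  have hXmeas : ∀ k, Measurable (X k) := fun k => ((hadapt k).mono (ℱ.le k) le_rfl)
  have hYsm : ∀ k, AEStronglyMeasurable (Y k) μ := fun k => (hYmeas k).aestronglyMeasurable
  have hone4 : Integrable (fun _ : Ω => (1:ℝ) ^ 4) μ := by simpa using integrable_const (1:ℝ)
  have hXi4 : ∀ i j k l, Integrable (fun ω => X i ω * X j ω * X k ω * X l ω) μ := fun i j k l =>
    integrable_mul4 (hXsm i) (hXsm j) (hXsm k) (hXsm l) (hX4i i) (hX4i j) (hX4i k) (hX4i l)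
  have hYi4 : ∀ i j k l, Integrable (fun ω => Y i ω * Y j ω * Y k ω * Y l ω) μ := fun i j k l =>
    integrable_mul4 (hYsm i) (hYsm j) (hYsm k) (hYsm l) (hY4i i) (hY4i j) (hY4i k) (hY4i l)
  have hXi2 : ∀ i j, Integrable (fun ω => X i ω * X j ω) μ := fun i j => by
    simpa using integrable_mul4 (hXsm i) (hXsm j) aestronglyMeasurable_const
      aestronglyMeasurable_const (hX4i i) (hX4i j) hone4 hone4
  have hXi1 : ∀ i, Integrable (X i) μ := fun i => by
    simpa using integrable_mul4 (hXsm i) aestronglyMeasurable_const aestronglyMeasurable_const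
      aestronglyMeasurable_const (hX4i i) hone4 hone4 hone4
  have hXisq : ∀ i, Integrable (fun ω => X i ω ^ 2) μ := fun i =>
    (hXi2 i i).congr (Filter.Eventually.of_forall fun ω => by ring)
  -- independence of monomials
  have hXseq : Measurable (fun ω k => X k ω) := measurable_pi_lambda _ fun k => hXmeas k
  have hYseq : Measurable (fun ω k => Y k ω) := measurable_pi_lambda _ fun k => hYmeas k
  have hfact : ∀ i j k l : ℕ,
      ∫ ω, X i ω * X j ω * X k ω * X l ω * (Y i ω * Y j ω * Y k ω * Y l ω) ∂μ
        = (∫ ω, X i ω * X j ω * X k ω * X l ω ∂μ) * ∫ ω, Y i ω * Y j ω * Y k ω * Y l ω ∂μ := by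
    intro i j k l
    have hF : Measurable (fun v : ℕ → ℝ => v i * v j * v k * v l) :=
      (((measurable_pi_apply i).mul (measurable_pi_apply j)).mul (measurable_pi_apply k)).mul
        (measurable_pi_apply l)
    exact (hindep.comp hF hF).integral_mul_eq_mul_integral ((hF.comp hXseq).aestronglyMeasurable)
      ((hF.comp hYseq).aestronglyMeasurable)
  have hZint : ∀ i j k l : ℕ, Integrable (fun ω =>
      X i ω * Y i ω * (X j ω * Y j ω) * (X k ω * Y k ω) * (X l ω * Y l ω)) μ := by
    intro i j k l
    have hF : Measurable (fun v : ℕ → ℝ => v i * v j * v k * v l) :=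
      (((measurable_pi_apply i).mul (measurable_pi_apply j)).mul (measurable_pi_apply k)).mul
        (measurable_pi_apply l)
    have h := (hindep.comp hF hF).integrable_mul (hXi4 i j k l) (hYi4 i j k l)
    exact h.congr (Filter.Eventually.of_forall fun ω => by
      simp only [Pi.mul_apply, Function.comp_apply]; ring)
  have hterm : ∀ i j k l : ℕ,
      ∫ ω, X i ω * Y i ω * (X j ω * Y j ω) * (X k ω * Y k ω) * (X l ω * Y l ω) ∂μ
        = (∫ ω, X i ω * X j ω * X k ω * X l ω ∂μ) * ∫ ω, Y i ω * Y j ω * Y k ω * Y l ω ∂μ := by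
    intro i j k l
    rw [← hfact i j k l]
    exact integral_congr_ae (Filter.Eventually.of_forall fun ω => by ring)
  -- conditional expectation keys
  have key0 : ∀ (m : ℕ) (W : Ω → ℝ), StronglyMeasurable[ℱ m] W →
      Integrable (fun ω => W ω * X (m+1) ω) μ → ∫ ω, W ω * X (m+1) ω ∂μ = 0 := by
    intro m W hW hint
    have hle := ℱ.le m
    have hae : μ[fun ω => W ω * X (m+1) ω|ℱ m] =ᵐ[μ] fun ω => W ω * (μ[X (m+1)|ℱ m]) ω :=
      condExp_mul_of_stronglyMeasurable_left hW hint (hXi1 (m+1))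
    have hzero : μ[fun ω => W ω * X (m+1) ω|ℱ m] =ᵐ[μ] fun _ => (0:ℝ) := by
      filter_upwards [hae, hcondmean m] with ω h1 h2
      rw [h1, h2]
      simp
    calc ∫ ω, W ω * X (m+1) ω ∂μ
        = ∫ ω, (μ[fun ω => W ω * X (m+1) ω|ℱ m]) ω ∂μ := (integral_condExp hle).symm
      _ = ∫ _ω, (0:ℝ) ∂μ := integral_congr_ae hzero
      _ = 0 := integral_zero _ _
  have key1 : ∀ (m : ℕ) (W : Ω → ℝ), StronglyMeasurable[ℱ m] W →
      Integrable (fun ω => W ω * X (m+1) ω ^ 2) μ → Integrable W μ →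
      ∫ ω, W ω * X (m+1) ω ^ 2 ∂μ = ∫ ω, W ω ∂μ := by
    intro m W hW hint hWint
    have hle := ℱ.le m
    have hae : μ[fun ω => W ω * X (m+1) ω ^ 2|ℱ m]
        =ᵐ[μ] fun ω => W ω * (μ[fun ω => X (m+1) ω ^ 2|ℱ m]) ω :=
      condExp_mul_of_stronglyMeasurable_left hW hint (hXisq (m+1))
    have hW' : μ[fun ω => W ω * X (m+1) ω ^ 2|ℱ m] =ᵐ[μ] W := by
      filter_upwards [hae, hcondvar m] with ω h1 h2
      rw [h1, h2]
      simp
    calc ∫ ω, W ω * X (m+1) ω ^ 2 ∂μ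
        = ∫ ω, (μ[fun ω => W ω * X (m+1) ω ^ 2|ℱ m]) ω ∂μ := (integral_condExp hle).symm
      _ = ∫ ω, W ω ∂μ := integral_congr_ae hW'
  -- X moment computations
  have EXsq : ∀ i, ∫ ω, X i ω ^ 2 ∂μ = 1 := by
    intro i
    cases i with
    | zero => exact hX0var
    | succ m =>
      have h := key1 m (fun _ => (1:ℝ)) stronglyMeasurable_const
        ((hXisq (m+1)).congr (Filter.Eventually.of_forall fun ω => by ring))
        (integrable_const 1)
      calc ∫ ω, X (m+1) ω ^ 2 ∂μ
          = ∫ ω, (1:ℝ) * X (m+1) ω ^ 2 ∂μ :=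
            integral_congr_ae (Filter.Eventually.of_forall fun ω => by ring)
        _ = ∫ _ω, (1:ℝ) ∂μ := h
        _ = 1 := by simp
  have EXsq' : ∀ i, ∫ ω, X i ω * X i ω ∂μ = 1 := fun i =>
    (integral_congr_ae (Filter.Eventually.of_forall fun ω => by ring)).trans (EXsq i)
  have EXpair : ∀ i j, i < j → ∫ ω, X i ω * X j ω ∂μ = 0 := by
    intro i j hij
    obtain ⟨m, rfl⟩ : ∃ m, j = m + 1 := ⟨j - 1, by omega⟩
    exact key0 m (X i) ((hadapt i).stronglyMeasurable.mono (ℱ.mono (by omega))) (hXi2 i (m+1))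
  have EXpair' : ∀ i j, i ≠ j → ∫ ω, X i ω * X j ω ∂μ = 0 := by
    intro i j hij
    rcases hij.lt_or_gt with h | h
    · exact EXpair i j h
    · exact (integral_congr_ae (Filter.Eventually.of_forall fun ω => by ring)).trans (EXpair j i h)
  have EOT : ∀ i j k m : ℕ, i < m → j < m → k < m →
      ∫ ω, X i ω * X j ω * X k ω * X m ω ∂μ = 0 := by
    intro i j k m hi hj hk
    obtain ⟨p, rfl⟩ : ∃ p, m = p + 1 := ⟨m - 1, by omega⟩
    exact key0 p (fun ω => X i ω * X j ω * X k ω)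
      ((((hadapt i).stronglyMeasurable.mono (ℱ.mono (by omega))).mul ((hadapt j).stronglyMeasurable.mono (ℱ.mono (by omega)))).mul
        ((hadapt k).stronglyMeasurable.mono (ℱ.mono (by omega)))) (hXi4 i j k (p+1))
  have Esq2 : ∀ i j m : ℕ, i < m → j < m →
      ∫ ω, X i ω * X j ω * X m ω * X m ω ∂μ = ∫ ω, X i ω * X j ω ∂μ := by
    intro i j m hi hj
    obtain ⟨p, rfl⟩ : ∃ p, m = p + 1 := ⟨m - 1, by omega⟩
    have h := key1 p (fun ω => X i ω * X j ω)
      (((hadapt i).stronglyMeasurable.mono (ℱ.mono (by omega))).mul ((hadapt j).stronglyMeasurable.mono (ℱ.mono (by omega))))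
      ((hXi4 i j (p+1) (p+1)).congr (Filter.Eventually.of_forall fun ω => by ring)) (hXi2 i j)
    calc ∫ ω, X i ω * X j ω * X (p+1) ω * X (p+1) ω ∂μ
        = ∫ ω, (X i ω * X j ω) * X (p+1) ω ^ 2 ∂μ :=
          integral_congr_ae (Filter.Eventually.of_forall fun ω => by ring)
      _ = ∫ ω, X i ω * X j ω ∂μ := h
  -- Y second-moment bounds
  have hc0 : ∀ i j, 0 ≤ ∫ ω, Y i ω ^ 2 * Y j ω ^ 2 ∂μ := fun i j =>
    integral_nonneg fun ω => by positivity
  have hYsq2int : ∀ i, Integrable (fun ω => (Y i ω ^ 2) ^ 2) μ := fun i =>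
    (hY4i i).congr (Filter.Eventually.of_forall fun ω => by ring)
  have hcle : ∀ i j, ∫ ω, Y i ω ^ 2 * Y j ω ^ 2 ∂μ ≤ C := by
    intro i j
    have hcs := integral_CS (μ := μ) (u := fun ω => Y i ω ^ 2) (v := fun ω => Y j ω ^ 2)
      ((hYmeas i).pow_const 2).aestronglyMeasurable ((hYmeas j).pow_const 2).aestronglyMeasurable
      (hYsq2int i) (hYsq2int j)
    have hsq : ∀ k : ℕ, Real.sqrt (∫ ω, (Y k ω ^ 2) ^ 2 ∂μ) ≤ Real.sqrt C := by
      intro k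
      refine Real.sqrt_le_sqrt ?_
      calc ∫ ω, (Y k ω ^ 2) ^ 2 ∂μ
          = ∫ ω, Y k ω ^ 4 ∂μ := integral_congr_ae (Filter.Eventually.of_forall fun ω => by ring)
        _ ≤ C := hY4 k
    calc ∫ ω, Y i ω ^ 2 * Y j ω ^ 2 ∂μ ≤ |∫ ω, Y i ω ^ 2 * Y j ω ^ 2 ∂μ| := le_abs_self _
      _ ≤ Real.sqrt (∫ ω, (Y i ω ^ 2) ^ 2 ∂μ) * Real.sqrt (∫ ω, (Y j ω ^ 2) ^ 2 ∂μ) := hcs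
      _ ≤ Real.sqrt C * Real.sqrt C :=
          mul_le_mul (hsq i) (hsq j) (Real.sqrt_nonneg _) (Real.sqrt_nonneg _)
      _ = C := Real.mul_self_sqrt hC0
  have hcsymm : ∀ i j, ∫ ω, Y i ω ^ 2 * Y j ω ^ 2 ∂μ = ∫ ω, Y j ω ^ 2 * Y i ω ^ 2 ∂μ :=
    fun i j => integral_congr_ae (Filter.Eventually.of_forall fun ω => by ring)
  -- integrability of pieces
  have IT4 : ∀ m, Integrable (fun ω => (∑ i ∈ range m, X i ω * Y i ω) ^ 4) μ := by
    intro m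
    have hs : Integrable (fun ω => ∑ i ∈ range m, ∑ j ∈ range m, ∑ k ∈ range m,
        ∑ l ∈ range m, X l ω * Y l ω * (X k ω * Y k ω) * (X j ω * Y j ω) * (X i ω * Y i ω)) μ :=
      integrable_finset_sum _ fun i _ => integrable_finset_sum _ fun j _ =>
        integrable_finset_sum _ fun k _ => integrable_finset_sum _ fun l _ => hZint l k j i
    exact hs.congr (Filter.Eventually.of_forall fun ω =>
      (expand4 (range m) (fun i => X i ω * Y i ω)).symm)
  have IT3Z : ∀ m, Integrable (fun ω =>
      (∑ i ∈ range m, X i ω * Y i ω) ^ 3 * (X m ω * Y m ω)) μ := by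
    intro m
    have hs : Integrable (fun ω => ∑ i ∈ range m, ∑ j ∈ range m, ∑ k ∈ range m,
        X k ω * Y k ω * (X j ω * Y j ω) * (X i ω * Y i ω) * (X m ω * Y m ω)) μ :=
      integrable_finset_sum _ fun i _ => integrable_finset_sum _ fun j _ =>
        integrable_finset_sum _ fun k _ => hZint k j i m
    exact hs.congr (Filter.Eventually.of_forall fun ω =>
      (expand3 (range m) (fun i => X i ω * Y i ω) (X m ω * Y m ω)).symm)
  have IT2Z2 : ∀ m, Integrable (fun ω =>
      (∑ i ∈ range m, X i ω * Y i ω) ^ 2 * (X m ω * Y m ω) ^ 2) μ := by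
    intro m
    have hs : Integrable (fun ω => ∑ i ∈ range m, ∑ j ∈ range m,
        X i ω * Y i ω * (X j ω * Y j ω) * (X m ω * Y m ω) * (X m ω * Y m ω)) μ :=
      integrable_finset_sum _ fun i _ => integrable_finset_sum _ fun j _ => hZint i j m m
    exact hs.congr (Filter.Eventually.of_forall fun ω =>
      (expand2 (range m) (fun i => X i ω * Y i ω) (X m ω * Y m ω)).symm)
  have ITZ3 : ∀ m, Integrable (fun ω =>
      (∑ i ∈ range m, X i ω * Y i ω) * (X m ω * Y m ω) ^ 3) μ := by
    intro m
    have hs : Integrable (fun ω => ∑ i ∈ range m,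
        X i ω * Y i ω * (X m ω * Y m ω) * (X m ω * Y m ω) * (X m ω * Y m ω)) μ :=
      integrable_finset_sum _ fun i _ => hZint i m m m
    exact hs.congr (Filter.Eventually.of_forall fun ω =>
      (expand1 (range m) (fun i => X i ω * Y i ω) (X m ω * Y m ω)).symm)
  have IZ4 : ∀ m, Integrable (fun ω => (X m ω * Y m ω) ^ 4) μ := fun m =>
    (hZint m m m m).congr (Filter.Eventually.of_forall fun ω => by ring)
  -- vanishing of the odd term
  have E3 : ∀ m, ∫ ω, (∑ i ∈ range m, X i ω * Y i ω) ^ 3 * (X m ω * Y m ω) ∂μ = 0 := by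
    intro m
    have h1 : ∫ ω, (∑ i ∈ range m, X i ω * Y i ω) ^ 3 * (X m ω * Y m ω) ∂μ
        = ∫ ω, ∑ i ∈ range m, ∑ j ∈ range m, ∑ k ∈ range m,
            (X k ω * Y k ω) * (X j ω * Y j ω) * (X i ω * Y i ω) * (X m ω * Y m ω) ∂μ :=
      integral_congr_ae (Filter.Eventually.of_forall fun ω =>
        expand3 (range m) (fun i => X i ω * Y i ω) (X m ω * Y m ω))
    rw [h1, integral_finset_sum _ (fun i _ => integrable_finset_sum _ fun j _ =>
      integrable_finset_sum _ fun k _ => hZint k j i m)]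
    refine Finset.sum_eq_zero fun i hi => ?_
    rw [integral_finset_sum _ (fun j _ => integrable_finset_sum _ fun k _ => hZint k j i m)]
    refine Finset.sum_eq_zero fun j hj => ?_
    rw [integral_finset_sum _ (fun k _ => hZint k j i m)]
    refine Finset.sum_eq_zero fun k hk => ?_
    rw [hterm k j i m, EOT k j i m (mem_range.mp hk) (mem_range.mp hj) (mem_range.mp hi),
      zero_mul]
  -- the square term
  have E2 : ∀ m, ∫ ω, (∑ i ∈ range m, X i ω * Y i ω) ^ 2 * (X m ω * Y m ω) ^ 2 ∂μ
      = ∑ i ∈ range m, ∫ ω, Y i ω ^ 2 * Y m ω ^ 2 ∂μ := by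
    intro m
    have h1 : ∫ ω, (∑ i ∈ range m, X i ω * Y i ω) ^ 2 * (X m ω * Y m ω) ^ 2 ∂μ
        = ∫ ω, ∑ i ∈ range m, ∑ j ∈ range m,
            (X i ω * Y i ω) * (X j ω * Y j ω) * (X m ω * Y m ω) * (X m ω * Y m ω) ∂μ :=
      integral_congr_ae (Filter.Eventually.of_forall fun ω =>
        expand2 (range m) (fun i => X i ω * Y i ω) (X m ω * Y m ω))
    rw [h1, integral_finset_sum _ (fun i _ => integrable_finset_sum _ fun j _ => hZint i j m m)]
    refine Finset.sum_congr rfl fun i hi => ?_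
    rw [integral_finset_sum _ (fun j _ => hZint i j m m)]
    rw [Finset.sum_eq_single_of_mem i hi (fun j hj hne => ?_)]
    · rw [hterm i i m m, Esq2 i i m (mem_range.mp hi) (mem_range.mp hi), EXsq' i, one_mul]
      exact integral_congr_ae (Filter.Eventually.of_forall fun ω => by ring)
    · rw [hterm i j m m, Esq2 i j m (mem_range.mp hi) (mem_range.mp hj),
        EXpair' i j (Ne.symm hne), zero_mul]
  -- fourth moment of a single term
  have EZ4 : ∀ m, ∫ ω, (X m ω * Y m ω) ^ 4 ∂μ
      = (∫ ω, X m ω ^ 4 ∂μ) * ∫ ω, Y m ω ^ 4 ∂μ := by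
    intro m
    calc ∫ ω, (X m ω * Y m ω) ^ 4 ∂μ
        = ∫ ω, X m ω * Y m ω * (X m ω * Y m ω) * (X m ω * Y m ω) * (X m ω * Y m ω) ∂μ :=
          integral_congr_ae (Filter.Eventually.of_forall fun ω => by ring)
      _ = (∫ ω, X m ω * X m ω * X m ω * X m ω ∂μ) * ∫ ω, Y m ω * Y m ω * Y m ω * Y m ω ∂μ :=
          hterm m m m m
      _ = (∫ ω, X m ω ^ 4 ∂μ) * ∫ ω, Y m ω ^ 4 ∂μ := by
          rw [show (∫ ω, X m ω * X m ω * X m ω * X m ω ∂μ) = ∫ ω, X m ω ^ 4 ∂μ from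
              integral_congr_ae (Filter.Eventually.of_forall fun ω => by ring),
            show (∫ ω, Y m ω * Y m ω * Y m ω * Y m ω ∂μ) = ∫ ω, Y m ω ^ 4 ∂μ from
              integral_congr_ae (Filter.Eventually.of_forall fun ω => by ring)]
  -- one-step expansion
  have step : ∀ m, ∫ ω, (∑ i ∈ range (m+1), X i ω * Y i ω) ^ 4 ∂μ
      = ∫ ω, (∑ i ∈ range m, X i ω * Y i ω) ^ 4 ∂μ
        + 6 * (∑ i ∈ range m, ∫ ω, Y i ω ^ 2 * Y m ω ^ 2 ∂μ)
        + 4 * (∫ ω, (∑ i ∈ range m, X i ω * Y i ω) * (X m ω * Y m ω) ^ 3 ∂μ)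
        + (∫ ω, X m ω ^ 4 ∂μ) * ∫ ω, Y m ω ^ 4 ∂μ := by
    intro m
    have hre : ∫ ω, (∑ i ∈ range (m+1), X i ω * Y i ω) ^ 4 ∂μ
        = ∫ ω, ((∑ i ∈ range m, X i ω * Y i ω) ^ 4
            + (4 * ((∑ i ∈ range m, X i ω * Y i ω) ^ 3 * (X m ω * Y m ω))
            + (6 * ((∑ i ∈ range m, X i ω * Y i ω) ^ 2 * (X m ω * Y m ω) ^ 2)
            + (4 * ((∑ i ∈ range m, X i ω * Y i ω) * (X m ω * Y m ω) ^ 3)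
            + (X m ω * Y m ω) ^ 4)))) ∂μ :=
      integral_congr_ae (Filter.Eventually.of_forall fun ω => by
        simp only [Finset.sum_range_succ]; ring)
    have i1 : Integrable (fun ω =>
        4 * ((∑ i ∈ range m, X i ω * Y i ω) ^ 3 * (X m ω * Y m ω))) μ := (IT3Z m).const_mul 4
    have i2 : Integrable (fun ω =>
        6 * ((∑ i ∈ range m, X i ω * Y i ω) ^ 2 * (X m ω * Y m ω) ^ 2)) μ :=
      (IT2Z2 m).const_mul 6
    have i3 : Integrable (fun ω =>
        4 * ((∑ i ∈ range m, X i ω * Y i ω) * (X m ω * Y m ω) ^ 3)) μ := (ITZ3 m).const_mul 4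
    have i4 : Integrable (fun ω => (X m ω * Y m ω) ^ 4) μ := IZ4 m
    have i34 : Integrable (fun ω =>
        4 * ((∑ i ∈ range m, X i ω * Y i ω) * (X m ω * Y m ω) ^ 3)
          + (X m ω * Y m ω) ^ 4) μ := i3.add i4
    have i234 : Integrable (fun ω =>
        6 * ((∑ i ∈ range m, X i ω * Y i ω) ^ 2 * (X m ω * Y m ω) ^ 2)
          + (4 * ((∑ i ∈ range m, X i ω * Y i ω) * (X m ω * Y m ω) ^ 3)
          + (X m ω * Y m ω) ^ 4)) μ := i2.add i34
    have i1234 : Integrable (fun ω =>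
        4 * ((∑ i ∈ range m, X i ω * Y i ω) ^ 3 * (X m ω * Y m ω))
          + (6 * ((∑ i ∈ range m, X i ω * Y i ω) ^ 2 * (X m ω * Y m ω) ^ 2)
          + (4 * ((∑ i ∈ range m, X i ω * Y i ω) * (X m ω * Y m ω) ^ 3)
          + (X m ω * Y m ω) ^ 4))) μ := i1.add i234
    rw [hre, integral_add (IT4 m) i1234, integral_add i1 i234, integral_add i2 i34,
      integral_add i3 i4, integral_const_mul, integral_const_mul, integral_const_mul,
      E3 m, E2 m, EZ4 m]
    ring
  -- symmetric double-sum step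
  have bstep : ∀ n, (∑ i ∈ range (n+1), ∑ j ∈ range (n+1) \ {i}, ∫ ω, Y i ω ^ 2 * Y j ω ^ 2 ∂μ)
      = (∑ i ∈ range n, ∑ j ∈ range n \ {i}, ∫ ω, Y i ω ^ 2 * Y j ω ^ 2 ∂μ)
        + 2 * ∑ i ∈ range n, ∫ ω, Y i ω ^ 2 * Y n ω ^ 2 ∂μ := by
    intro n
    have h1 : insert n (range n) \ {n} = range n := by
      rw [Finset.sdiff_singleton_eq_erase, Finset.erase_insert Finset.notMem_range_self]
    have h2 : ∀ i, i ∈ range n → insert n (range n) \ {i} = insert n (range n \ {i}) := by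
      intro i hi
      rw [Finset.sdiff_singleton_eq_erase, Finset.sdiff_singleton_eq_erase,
        Finset.erase_insert_of_ne (by exact fun h => Finset.notMem_range_self (h ▸ hi))]
    have h3 : (∑ j ∈ range n, ∫ ω, Y n ω ^ 2 * Y j ω ^ 2 ∂μ)
        = ∑ j ∈ range n, ∫ ω, Y j ω ^ 2 * Y n ω ^ 2 ∂μ :=
      Finset.sum_congr rfl fun j _ => hcsymm n j
    calc (∑ i ∈ range (n+1), ∑ j ∈ range (n+1) \ {i}, ∫ ω, Y i ω ^ 2 * Y j ω ^ 2 ∂μ)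
        = (∑ j ∈ range n, ∫ ω, Y n ω ^ 2 * Y j ω ^ 2 ∂μ)
          + ∑ i ∈ range n, ∑ j ∈ insert n (range n) \ {i}, ∫ ω, Y i ω ^ 2 * Y j ω ^ 2 ∂μ := by
          rw [Finset.range_add_one, Finset.sum_insert Finset.notMem_range_self, h1]
      _ = (∑ j ∈ range n, ∫ ω, Y n ω ^ 2 * Y j ω ^ 2 ∂μ)
          + ∑ i ∈ range n, (∫ ω, Y i ω ^ 2 * Y n ω ^ 2 ∂μ
            + ∑ j ∈ range n \ {i}, ∫ ω, Y i ω ^ 2 * Y j ω ^ 2 ∂μ) := by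
          refine congrArg _ (Finset.sum_congr rfl fun i hi => ?_)
          rw [h2 i hi, Finset.sum_insert (by simp)]
      _ = _ := by rw [Finset.sum_add_distrib, h3]; ring
  -- master identity
  have master : ∀ n, ∫ ω, (∑ i ∈ range n, X i ω * Y i ω) ^ 4 ∂μ
      = 3 * (∑ i ∈ range n, ∑ j ∈ range n \ {i}, ∫ ω, Y i ω ^ 2 * Y j ω ^ 2 ∂μ)
        + ∑ m ∈ range n,
            (4 * (∫ ω, (∑ i ∈ range m, X i ω * Y i ω) * (X m ω * Y m ω) ^ 3 ∂μ)
              + (∫ ω, X m ω ^ 4 ∂μ) * ∫ ω, Y m ω ^ 4 ∂μ) := by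
    intro n
    induction n with
    | zero => simp
    | succ n ih =>
      rw [step n, ih, bstep n, Finset.sum_range_succ]
      ring
  -- Cauchy–Schwarz bound for the odd remainder term
  have hE1b : ∀ m, |∫ ω, (∑ i ∈ range m, X i ω * Y i ω) * (X m ω * Y m ω) ^ 3 ∂μ|
      ≤ Real.sqrt (C * m) * C := by
    intro m
    have hTm : Measurable (fun ω => ∑ i ∈ range m, X i ω * Y i ω) :=
      Finset.measurable_sum _ fun i _ => (hXmeas i).mul (hYmeas i)
    have hZm : Measurable (fun ω => X m ω * Y m ω) := (hXmeas m).mul (hYmeas m)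
    have hu : AEStronglyMeasurable
        (fun ω => (∑ i ∈ range m, X i ω * Y i ω) * (X m ω * Y m ω)) μ :=
      (hTm.mul hZm).aestronglyMeasurable
    have hv : AEStronglyMeasurable (fun ω => (X m ω * Y m ω) ^ 2) μ :=
      (hZm.pow_const 2).aestronglyMeasurable
    have hu2 : Integrable
        (fun ω => ((∑ i ∈ range m, X i ω * Y i ω) * (X m ω * Y m ω)) ^ 2) μ :=
      (IT2Z2 m).congr (Filter.Eventually.of_forall fun ω => by ring)
    have hv2 : Integrable (fun ω => ((X m ω * Y m ω) ^ 2) ^ 2) μ :=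
      (IZ4 m).congr (Filter.Eventually.of_forall fun ω => by ring)
    have hcs := integral_CS (μ := μ) hu hv hu2 hv2
    have heq : ∫ ω, (∑ i ∈ range m, X i ω * Y i ω) * (X m ω * Y m ω) ^ 3 ∂μ
        = ∫ ω, ((∑ i ∈ range m, X i ω * Y i ω) * (X m ω * Y m ω)) * (X m ω * Y m ω) ^ 2 ∂μ :=
      integral_congr_ae (Filter.Eventually.of_forall fun ω => by ring)
    rw [heq]
    refine hcs.trans ?_
    have hb1 : Real.sqrt (∫ ω, ((∑ i ∈ range m, X i ω * Y i ω) * (X m ω * Y m ω)) ^ 2 ∂μ)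
        ≤ Real.sqrt (C * m) := by
      refine Real.sqrt_le_sqrt ?_
      have he : ∫ ω, ((∑ i ∈ range m, X i ω * Y i ω) * (X m ω * Y m ω)) ^ 2 ∂μ
          = ∑ i ∈ range m, ∫ ω, Y i ω ^ 2 * Y m ω ^ 2 ∂μ :=
        (integral_congr_ae (Filter.Eventually.of_forall fun ω => by ring)).trans (E2 m)
      rw [he]
      calc ∑ i ∈ range m, ∫ ω, Y i ω ^ 2 * Y m ω ^ 2 ∂μ
          ≤ (range m).card • C := Finset.sum_le_card_nsmul _ _ C fun i _ => hcle i m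
        _ = C * m := by rw [Finset.card_range, nsmul_eq_mul]; ring
    have hb2 : Real.sqrt (∫ ω, ((X m ω * Y m ω) ^ 2) ^ 2 ∂μ) ≤ C := by
      have he : ∫ ω, ((X m ω * Y m ω) ^ 2) ^ 2 ∂μ
          = (∫ ω, X m ω ^ 4 ∂μ) * ∫ ω, Y m ω ^ 4 ∂μ :=
        (integral_congr_ae (Filter.Eventually.of_forall fun ω => by ring)).trans (EZ4 m)
      have hle : ∫ ω, ((X m ω * Y m ω) ^ 2) ^ 2 ∂μ ≤ C * C := by
        rw [he]
        exact mul_le_mul (hX4 m) (hY4 m) (integral_nonneg fun ω => by positivity) hC0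
      calc Real.sqrt (∫ ω, ((X m ω * Y m ω) ^ 2) ^ 2 ∂μ)
          ≤ Real.sqrt (C * C) := Real.sqrt_le_sqrt hle
        _ = C := Real.sqrt_mul_self hC0
    exact mul_le_mul hb1 hb2 (Real.sqrt_nonneg _) (Real.sqrt_nonneg _)
  -- remainder bound
  have hRb : ∀ n, |∑ m ∈ range n,
        (4 * (∫ ω, (∑ i ∈ range m, X i ω * Y i ω) * (X m ω * Y m ω) ^ 3 ∂μ)
          + (∫ ω, X m ω ^ 4 ∂μ) * ∫ ω, Y m ω ^ 4 ∂μ)|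
      ≤ (4 * (Real.sqrt (C * n) * C) + C * C) * n := by
    intro n
    refine le_trans (Finset.abs_sum_le_sum_abs _ _) ?_
    have hterm_le : ∀ m ∈ range n,
        |4 * (∫ ω, (∑ i ∈ range m, X i ω * Y i ω) * (X m ω * Y m ω) ^ 3 ∂μ)
          + (∫ ω, X m ω ^ 4 ∂μ) * ∫ ω, Y m ω ^ 4 ∂μ|
        ≤ 4 * (Real.sqrt (C * n) * C) + C * C := by
      intro m hm
      have h1 : |4 * (∫ ω, (∑ i ∈ range m, X i ω * Y i ω) * (X m ω * Y m ω) ^ 3 ∂μ)|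
          ≤ 4 * (Real.sqrt (C * n) * C) := by
        rw [abs_mul, abs_of_nonneg (by norm_num : (0:ℝ) ≤ 4)]
        refine mul_le_mul_of_nonneg_left ((hE1b m).trans ?_) (by norm_num)
        refine mul_le_mul_of_nonneg_right (Real.sqrt_le_sqrt ?_) hC0
        exact mul_le_mul_of_nonneg_left (Nat.cast_le.mpr (le_of_lt (mem_range.mp hm))) hC0
      have h2 : |(∫ ω, X m ω ^ 4 ∂μ) * ∫ ω, Y m ω ^ 4 ∂μ| ≤ C * C := by
        rw [abs_of_nonneg (mul_nonneg (integral_nonneg fun ω => by positivity)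
          (integral_nonneg fun ω => by positivity))]
        exact mul_le_mul (hX4 m) (hY4 m) (integral_nonneg fun ω => by positivity) hC0
      calc |4 * (∫ ω, (∑ i ∈ range m, X i ω * Y i ω) * (X m ω * Y m ω) ^ 3 ∂μ)
            + (∫ ω, X m ω ^ 4 ∂μ) * ∫ ω, Y m ω ^ 4 ∂μ|
          ≤ |4 * (∫ ω, (∑ i ∈ range m, X i ω * Y i ω) * (X m ω * Y m ω) ^ 3 ∂μ)|
            + |(∫ ω, X m ω ^ 4 ∂μ) * ∫ ω, Y m ω ^ 4 ∂μ| := abs_add_le _ _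
        _ ≤ 4 * (Real.sqrt (C * n) * C) + C * C := add_le_add h1 h2
    calc ∑ m ∈ range n, |4 * (∫ ω, (∑ i ∈ range m, X i ω * Y i ω) * (X m ω * Y m ω) ^ 3 ∂μ)
            + (∫ ω, X m ω ^ 4 ∂μ) * ∫ ω, Y m ω ^ 4 ∂μ|
        ≤ (range n).card • (4 * (Real.sqrt (C * n) * C) + C * C) :=
          Finset.sum_le_card_nsmul _ _ _ hterm_le
      _ = (4 * (Real.sqrt (C * n) * C) + C * C) * n := by
          rw [Finset.card_range, nsmul_eq_mul]; ring
  -- the remainder over n² tends to 0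
  have hR0 : Tendsto (fun n : ℕ => (∑ m ∈ range n,
        (4 * (∫ ω, (∑ i ∈ range m, X i ω * Y i ω) * (X m ω * Y m ω) ^ 3 ∂μ)
          + (∫ ω, X m ω ^ 4 ∂μ) * ∫ ω, Y m ω ^ 4 ∂μ)) / (n : ℝ) ^ 2)
      atTop (nhds 0) := by
    have hsqrt : Tendsto (fun n : ℕ => Real.sqrt n) atTop atTop := by
      have h1 : Tendsto (fun x : ℝ => x ^ ((1:ℝ)/2)) atTop atTop :=
        tendsto_rpow_atTop (by norm_num)
      exact (h1.comp tendsto_natCast_atTop_atTop).congr fun n => (Real.sqrt_eq_rpow _).symm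
    have hg : Tendsto (fun n : ℕ => (4 * (Real.sqrt C * C) + C * C) / Real.sqrt n)
        atTop (nhds 0) := Tendsto.div_atTop tendsto_const_nhds hsqrt
    refine squeeze_zero_norm' ?_ hg
    filter_upwards [Filter.eventually_ge_atTop 1] with n hn
    have hn1 : (1:ℝ) ≤ (n:ℝ) := by exact_mod_cast hn
    have hnpos : (0:ℝ) < (n:ℝ) := lt_of_lt_of_le one_pos hn1
    have hs : Real.sqrt (n:ℝ) * Real.sqrt (n:ℝ) = (n:ℝ) := Real.mul_self_sqrt (le_of_lt hnpos)
    have h1s : (1:ℝ) ≤ Real.sqrt (n:ℝ) := by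
      rw [show (1:ℝ) = Real.sqrt 1 from (Real.sqrt_one).symm]
      exact Real.sqrt_le_sqrt hn1
    have hsn : Real.sqrt (n:ℝ) ≤ (n:ℝ) := by nlinarith
    rw [Real.norm_eq_abs, abs_div, abs_of_nonneg (by positivity : (0:ℝ) ≤ (n:ℝ)^2)]
    have hnum := hRb n
    have hCn : Real.sqrt (C * n) = Real.sqrt C * Real.sqrt n := Real.sqrt_mul hC0 _
    rw [div_le_div_iff₀ (by positivity) (by positivity : (0:ℝ) < Real.sqrt n)]
    calc |∑ m ∈ range n,
            (4 * (∫ ω, (∑ i ∈ range m, X i ω * Y i ω) * (X m ω * Y m ω) ^ 3 ∂μ)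
              + (∫ ω, X m ω ^ 4 ∂μ) * ∫ ω, Y m ω ^ 4 ∂μ)| * Real.sqrt n
        ≤ ((4 * (Real.sqrt (C * n) * C) + C * C) * n) * Real.sqrt n := by
          exact mul_le_mul_of_nonneg_right hnum (Real.sqrt_nonneg _)
      _ ≤ (4 * (Real.sqrt C * C) + C * C) * (n:ℝ) ^ 2 := by
          rw [hCn]
          nlinarith [Real.sqrt_nonneg C, Real.sqrt_nonneg (n:ℝ),
            mul_nonneg (mul_nonneg hC0 hC0) (le_of_lt hnpos),
            mul_nonneg (mul_nonneg (Real.sqrt_nonneg C) hC0) (le_of_lt hnpos)]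
  -- rewrite the left-hand sequence
  have hA : ∀ n : ℕ, ∫ ω, ((∑ i ∈ range n, X i ω * Y i ω) / Real.sqrt n) ^ 4 ∂μ
      = (∫ ω, (∑ i ∈ range n, X i ω * Y i ω) ^ 4 ∂μ) / (n : ℝ) ^ 2 := by
    intro n
    have hpt : ∀ ω, ((∑ i ∈ range n, X i ω * Y i ω) / Real.sqrt n) ^ 4
        = ((∑ i ∈ range n, X i ω * Y i ω) ^ 4) / (n : ℝ) ^ 2 := by
      intro ω
      rw [div_pow]
      congr 1
      rw [show (4:ℕ) = 2 * 2 from rfl, pow_mul, Real.sq_sqrt (Nat.cast_nonneg n)]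
    rw [integral_congr_ae (Filter.Eventually.of_forall hpt), integral_div]
  have hseq : (fun n : ℕ => ∫ ω, ((∑ i ∈ range n, X i ω * Y i ω) / Real.sqrt n) ^ 4 ∂μ)
      = fun n : ℕ =>
        (3 * (∑ i ∈ range n, ∑ j ∈ range n \ {i}, ∫ ω, Y i ω ^ 2 * Y j ω ^ 2 ∂μ)
          + ∑ m ∈ range n,
              (4 * (∫ ω, (∑ i ∈ range m, X i ω * Y i ω) * (X m ω * Y m ω) ^ 3 ∂μ)
                + (∫ ω, X m ω ^ 4 ∂μ) * ∫ ω, Y m ω ^ 4 ∂μ)) / (n : ℝ) ^ 2 :=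
    funext fun n => by rw [hA n, master n]
  rw [hseq]
  constructor
  · intro h
    have h3 : (fun n : ℕ => (∑ i ∈ range n, ∑ j ∈ range n \ {i},
          ∫ ω, Y i ω ^ 2 * Y j ω ^ 2 ∂μ) / (n : ℝ) ^ 2)
        = fun n : ℕ =>
          ((3 * (∑ i ∈ range n, ∑ j ∈ range n \ {i}, ∫ ω, Y i ω ^ 2 * Y j ω ^ 2 ∂μ)
            + ∑ m ∈ range n,
                (4 * (∫ ω, (∑ i ∈ range m, X i ω * Y i ω) * (X m ω * Y m ω) ^ 3 ∂μ)
                  + (∫ ω, X m ω ^ 4 ∂μ) * ∫ ω, Y m ω ^ 4 ∂μ)) / (n : ℝ) ^ 2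
            - (∑ m ∈ range n,
                (4 * (∫ ω, (∑ i ∈ range m, X i ω * Y i ω) * (X m ω * Y m ω) ^ 3 ∂μ)
                  + (∫ ω, X m ω ^ 4 ∂μ) * ∫ ω, Y m ω ^ 4 ∂μ)) / (n : ℝ) ^ 2) / 3 :=
      funext fun n => by ring
    rw [h3]
    have hlim := (h.sub hR0).div_const 3
    norm_num at hlim
    exact hlim
  · intro h
    have h3 : (fun n : ℕ =>
        (3 * (∑ i ∈ range n, ∑ j ∈ range n \ {i}, ∫ ω, Y i ω ^ 2 * Y j ω ^ 2 ∂μ)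
          + ∑ m ∈ range n,
              (4 * (∫ ω, (∑ i ∈ range m, X i ω * Y i ω) * (X m ω * Y m ω) ^ 3 ∂μ)
                + (∫ ω, X m ω ^ 4 ∂μ) * ∫ ω, Y m ω ^ 4 ∂μ)) / (n : ℝ) ^ 2)
        = fun n : ℕ =>
          3 * ((∑ i ∈ range n, ∑ j ∈ range n \ {i},
              ∫ ω, Y i ω ^ 2 * Y j ω ^ 2 ∂μ) / (n : ℝ) ^ 2)
            + (∑ m ∈ range n,
                (4 * (∫ ω, (∑ i ∈ range m, X i ω * Y i ω) * (X m ω * Y m ω) ^ 3 ∂μ)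
                  + (∫ ω, X m ω ^ 4 ∂μ) * ∫ ω, Y m ω ^ 4 ∂μ)) / (n : ℝ) ^ 2 :=
      funext fun n => by ring
    rw [h3]
    have hlim := (h.const_mul 3).add hR0
    norm_num at hlim
    exact hlim
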